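/- In the ADMM-like algorithm, the dual update q₁^{(k+1)} = q₁^{(k)} + u^{(k+1)} − v^{(k+1)}, where v^{(k+1)} minimizes v ↦ λ‖∇₁v‖₀ + (η^{(k)}/2)‖u^{(k+1)} − v + q₁^{(k)}‖₂², satisfies ‖q₁^{(k+1)}‖₂² ≤ 2λn/η^{(k)}, where n is the number of grid points. -/
import Mathlib


open Filter Topology

/-- Grouped ℓ⁰ semi-norm: counts the grid points with nonzero d-dimensional group. -/
noncomputable def l0 {n d : ℕ} (w : Fin n → Fin d → ℝ) : ℝ :=
  Set.ncard {i : Fin n | w i ≠ 0}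

lemma l0_nonneg {n d : ℕ} (w : Fin n → Fin d → ℝ) : 0 ≤ l0 w := by
  simp [l0]

lemma l0_le {n d : ℕ} (w : Fin n → Fin d → ℝ) : l0 w ≤ n := by
  unfold l0
  have : {i : Fin n | w i ≠ 0}.ncard ≤ n := by
    calc {i : Fin n | w i ≠ 0}.ncard ≤ (Set.univ : Set (Fin n)).ncard :=
          Set.ncard_le_ncard (Set.subset_univ _) Set.finite_univ
      _ = n := by rw [Set.ncard_univ]; simp
  exact_mod_cast this

/-- The dual update of the ADMM-like algorithm satisfies ‖q₁^{(k+1)}‖₂² ≤ 2λn/η^{(k)}. -/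
theorem stmt8 {N n d : ℕ}
    (D1 : EuclideanSpace ℝ (Fin N) →ₗ[ℝ] (Fin n → Fin d → ℝ))
    (lam η : ℝ) (hlam : 0 < lam) (hη : 0 < η)
    (u q vnew qnew : EuclideanSpace ℝ (Fin N))
    (hv : ∀ x : EuclideanSpace ℝ (Fin N),
      lam * l0 (D1 vnew) + η / 2 * ‖u - vnew + q‖ ^ 2 ≤
        lam * l0 (D1 x) + η / 2 * ‖u - x + q‖ ^ 2)
    (hq : qnew = q + u - vnew) :
    ‖qnew‖ ^ 2 ≤ 2 * lam * n / η := by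
  have h := hv (u + q)
  have he : u - (u + q) + q = 0 := by abel
  rw [he, norm_zero] at h
  have hqe : qnew = u - vnew + q := by rw [hq]; abel
  rw [← hqe] at h
  have h1 : η / 2 * ‖qnew‖ ^ 2 ≤ lam * n := by
    have h2 : lam * l0 (D1 (u + q)) ≤ lam * n :=
      mul_le_mul_of_nonneg_left (l0_le _) hlam.le
    have h3 : 0 ≤ lam * l0 (D1 vnew) :=
      mul_nonneg hlam.le (l0_nonneg _)
    nlinarith
  rw [le_div_iff₀ hη]
  nlinarith
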